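/- Let n ≥ 1 be an integer and let p, q, r be points of ℝ² with integer coordinates in [0, n], such that the vectors q − p and r − p are linearly independent over ℝ (i.e., the lines through p,q and through p,r are distinct). Let θ ∈ [0, π] be the angle between the vectors q − p and r − p. Then min(θ, π − θ) > 2·arctan(1/(6n²)). -/

import Mathlib

open Real RealInnerProductSpace

private lemma arctan_le_self' {t : ℝ} (ht : 0 ≤ t) : arctan t ≤ t := by
  have h1 : 0 ≤ arctan t := by
    have := Real.arctan_strictMono.monotone ht
    simpa [Real.arctan_zero] using this
  have h2 := Real.le_tan h1 (Real.arctan_lt_pi_div_two t)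
  rwa [Real.tan_arctan] at h2

set_option maxHeartbeats 4000000 in
/-- **Lemma 5.** In an `n × n` grid (`n ≥ 1`), if `p, q, r` are grid points such that
`q - p` and `r - p` are linearly independent, then the angle between the lines through
`p, q` and through `p, r` (namely `min θ (π - θ)` where `θ` is the angle between the
vectors `q - p` and `r - p`) is larger than `2 · arctan (1/(6n²))`. -/
theorem grid_line_angle_lower_bound (n : ℕ) (hn : 1 ≤ n)
    (p q r : EuclideanSpace ℝ (Fin 2))
    (hp : ∀ i, ∃ k : ℤ, 0 ≤ k ∧ k ≤ (n : ℤ) ∧ p i = (k : ℝ))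
    (hq : ∀ i, ∃ k : ℤ, 0 ≤ k ∧ k ≤ (n : ℤ) ∧ q i = (k : ℝ))
    (hr : ∀ i, ∃ k : ℤ, 0 ≤ k ∧ k ≤ (n : ℤ) ∧ r i = (k : ℝ))
    (hli : LinearIndependent ℝ ![q - p, r - p]) :
    min (InnerProductGeometry.angle (q - p) (r - p))
        (π - InnerProductGeometry.angle (q - p) (r - p))
      > 2 * arctan (1 / (6 * (n : ℝ) ^ 2)) := by
  set u := q - p with hu
  set v := r - p with hv
  obtain ⟨p0, hp00, hp01, hp0⟩ := hp 0
  obtain ⟨p1, hp10, hp11, hp1⟩ := hp 1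
  obtain ⟨q0, hq00, hq01, hq0⟩ := hq 0
  obtain ⟨q1, hq10, hq11, hq1⟩ := hq 1
  obtain ⟨r0, hr00, hr01, hr0⟩ := hr 0
  obtain ⟨r1, hr10, hr11, hr1⟩ := hr 1
  have hu0 : u 0 = ((q0 - p0 : ℤ) : ℝ) := by simp [hu, hq0, hp0]
  have hu1 : u 1 = ((q1 - p1 : ℤ) : ℝ) := by simp [hu, hq1, hp1]
  have hv0 : v 0 = ((r0 - p0 : ℤ) : ℝ) := by simp [hv, hr0, hp0]
  have hv1 : v 1 = ((r1 - p1 : ℤ) : ℝ) := by simp [hv, hr1, hp1]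
  set a0 : ℤ := q0 - p0 with ha0d
  set a1 : ℤ := q1 - p1 with ha1d
  set b0 : ℤ := r0 - p0 with hb0d
  set b1 : ℤ := r1 - p1 with hb1d
  set D : ℤ := a0 * b1 - a1 * b0 with hD
  have happly : ∀ (s t : ℝ) (i : Fin 2), (s • u + t • v) i = s * u i + t * v i := by
    intro s t i
    simp [PiLp.add_apply, PiLp.smul_apply, smul_eq_mul]
  have hpair := LinearIndependent.pair_iff.1 hli
  have hDne : D ≠ 0 := by
    intro h0
    have hDr : (a0 : ℝ) * b1 - (a1 : ℝ) * b0 = 0 := by exact_mod_cast congrArg (Int.cast : ℤ → ℝ) h0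
    have h1 : ((b1 : ℝ)) • u + (-(a1 : ℝ)) • v = 0 := by
      refine PiLp.ext fun i => ?_
      fin_cases i <;> simp only [Fin.zero_eta, Fin.mk_one]
      · rw [happly]; rw [hu0, hv0]; simp only [PiLp.zero_apply]; nlinarith [hDr]
      · rw [happly]; rw [hu1, hv1]; simp only [PiLp.zero_apply]; ring
    obtain ⟨e1, e2⟩ := hpair _ _ h1
    have hb1 : (b1 : ℝ) = 0 := e1
    have ha1 : (a1 : ℝ) = 0 := by linarith [e2]
    have h2 : ((b0 : ℝ)) • u + (-(a0 : ℝ)) • v = 0 := by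
      refine PiLp.ext fun i => ?_
      fin_cases i <;> simp only [Fin.zero_eta, Fin.mk_one]
      · rw [happly]; rw [hu0, hv0]; simp only [PiLp.zero_apply]; ring
      · rw [happly]; rw [hu1, hv1, ha1, hb1]; simp only [PiLp.zero_apply]; ring
    obtain ⟨e3, e4⟩ := hpair _ _ h2
    have hb0 : (b0 : ℝ) = 0 := e3
    have ha0 : (a0 : ℝ) = 0 := by linarith [e4]
    have hu_zero : u = 0 := by
      refine PiLp.ext fun i => ?_
      fin_cases i <;> simp only [Fin.zero_eta, Fin.mk_one]
      · rw [hu0, ha0]; simp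
      · rw [hu1, ha1]; simp
    have := hpair 1 0 (by rw [hu_zero]; simp)
    exact one_ne_zero this.1
  have habs : (1 : ℝ) ≤ |(D : ℝ)| := by
    rw [← Int.cast_abs]
    exact_mod_cast Int.one_le_abs hDne
  have ha0b : |(a0 : ℝ)| ≤ n := by rw [← Int.cast_abs]; exact_mod_cast (abs_le.2 ⟨by omega, by omega⟩ : |a0| ≤ (n:ℤ))
  have ha1b : |(a1 : ℝ)| ≤ n := by rw [← Int.cast_abs]; exact_mod_cast (abs_le.2 ⟨by omega, by omega⟩ : |a1| ≤ (n:ℤ))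
  have hb0b : |(b0 : ℝ)| ≤ n := by rw [← Int.cast_abs]; exact_mod_cast (abs_le.2 ⟨by omega, by omega⟩ : |b0| ≤ (n:ℤ))
  have hb1b : |(b1 : ℝ)| ≤ n := by rw [← Int.cast_abs]; exact_mod_cast (abs_le.2 ⟨by omega, by omega⟩ : |b1| ≤ (n:ℤ))
  have hinner : ∀ x y : EuclideanSpace ℝ (Fin 2), ⟪x, y⟫ = x 0 * y 0 + x 1 * y 1 := by
    intro x y
    simp [PiLp.inner_apply, Fin.sum_univ_two, RCLike.inner_apply, mul_comm]
  have hnn : (0:ℝ) < n := by exact_mod_cast hn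
  have hgram : ⟪u, u⟫ * ⟪v, v⟫ - ⟪u, v⟫ * ⟪u, v⟫ = (D : ℝ) ^ 2 := by
    rw [hinner, hinner, hinner, hu0, hu1, hv0, hv1]
    push_cast [hD]
    ring
  set θ := InnerProductGeometry.angle u v with hθ
  have hsin := InnerProductGeometry.sin_angle_mul_norm_mul_norm u v
  rw [hgram, Real.sqrt_sq_eq_abs] at hsin
  have hnormuv : ‖u‖ * ‖v‖ ≤ 2 * (n:ℝ)^2 := by
    have e1 : ⟪u, u⟫ = ‖u‖^2 := real_inner_self_eq_norm_sq u
    have e2 : ⟪v, v⟫ = ‖v‖^2 := real_inner_self_eq_norm_sq v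
    have hu2 : ‖u‖^2 ≤ 2 * (n:ℝ)^2 := by
      rw [← e1, hinner, hu0, hu1]
      nlinarith [sq_abs ((a0:ℝ)), sq_abs ((a1:ℝ)), abs_nonneg ((a0:ℝ)), abs_nonneg ((a1:ℝ)), ha0b, ha1b]
    have hv2 : ‖v‖^2 ≤ 2 * (n:ℝ)^2 := by
      rw [← e2, hinner, hv0, hv1]
      nlinarith [sq_abs ((b0:ℝ)), sq_abs ((b1:ℝ)), abs_nonneg ((b0:ℝ)), abs_nonneg ((b1:ℝ)), hb0b, hb1b]
    nlinarith [norm_nonneg u, norm_nonneg v]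
  have hupos : ‖u‖ ≠ 0 := by
    intro h
    have hu_zero : u = 0 := norm_eq_zero.1 h
    have := hpair 1 0 (by rw [hu_zero]; simp)
    exact one_ne_zero this.1
  have hvpos : ‖v‖ ≠ 0 := by
    intro h
    have hv_zero : v = 0 := norm_eq_zero.1 h
    have := hpair 0 1 (by rw [hv_zero]; simp)
    exact one_ne_zero this.2
  have hprodpos : 0 < ‖u‖ * ‖v‖ :=
    mul_pos ((norm_nonneg u).lt_of_ne (Ne.symm hupos)) ((norm_nonneg v).lt_of_ne (Ne.symm hvpos))
  -- sin θ ≥ 1/(2n²)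
  have hsinθ : Real.sin θ ≥ 1 / (2 * (n:ℝ)^2) := by
    have h1 : Real.sin θ = |(D:ℝ)| / (‖u‖ * ‖v‖) := by
      field_simp at hsin ⊢
      linarith [hsin]
    rw [h1]
    rw [ge_iff_le, div_le_div_iff₀ (by positivity) hprodpos]
    nlinarith
  -- set m = min
  set m := min θ (π - θ) with hm
  have hθ0 : 0 ≤ θ := InnerProductGeometry.angle_nonneg u v
  have hθπ : θ ≤ π := InnerProductGeometry.angle_le_pi u v
  have hm0 : 0 ≤ m := le_min hθ0 (by linarith)
  have hsinm : Real.sin m = Real.sin θ := by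
    rcases min_cases θ (π - θ) with ⟨h, _⟩ | ⟨h, _⟩
    · rw [hm, h]
    · rw [hm, h, Real.sin_pi_sub]
  have hspos : 0 < Real.sin m := by
    rw [hsinm]
    have : (0:ℝ) < 1 / (2 * (n:ℝ)^2) := by positivity
    linarith
  have hmpos : 0 < m := by
    rcases hm0.lt_or_eq with h | h
    · exact h
    · exfalso; rw [← h, Real.sin_zero] at hspos; exact lt_irrefl 0 hspos
  have hmgt : m > 1 / (2 * (n:ℝ)^2) := by
    have := Real.sin_lt hmpos
    rw [hsinm] at this
    linarith
  have harct : 2 * arctan (1 / (6 * (n : ℝ) ^ 2)) ≤ 2 * (1 / (6 * (n : ℝ) ^ 2)) := by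
    have := arctan_le_self' (t := 1 / (6 * (n : ℝ) ^ 2)) (by positivity)
    linarith
  have hlt : 2 * (1 / (6 * (n : ℝ) ^ 2)) < 1 / (2 * (n:ℝ)^2) := by
    rw [mul_one_div, div_lt_div_iff₀ (by positivity) (by positivity)]
    nlinarith
  exact lt_of_le_of_lt harct (hlt.trans hmgt)
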